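/- Combining reward perturbation eps_r and transition perturbation eps_P: if |r - r'| <= eps_r pointwise and TV(P(.|s,a), P'(.|s,a)) <= eps_P for all (s,a), with |r| <= 1 and discount gamma in [0,1), then for any policy pi, sup_s |V^pi_{r,P}(s) - V^pi_{r',P'}(s)| <= eps_r/(1-gamma) + 2 gamma eps_P/(1-gamma)^2. -/
import Mathlib

private lemma wsum_abs_le {ι : Type*} [Fintype ι] (w f : ι → ℝ)
    (hw0 : ∀ i, 0 ≤ w i) (hw1 : ∑ i, w i = 1) (c : ℝ) (hf : ∀ i, |f i| ≤ c) :
    |∑ i, w i * f i| ≤ c := by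
  calc |∑ i, w i * f i| ≤ ∑ i, |w i * f i| := Finset.abs_sum_le_sum_abs _ _
    _ = ∑ i, w i * |f i| := by
        refine Finset.sum_congr rfl fun i _ => ?_
        rw [abs_mul, abs_of_nonneg (hw0 i)]
    _ ≤ ∑ i, w i * c := Finset.sum_le_sum fun i _ =>
        mul_le_mul_of_nonneg_left (hf i) (hw0 i)
    _ = c := by rw [← Finset.sum_mul, hw1, one_mul]

/-- combined reward and transition perturbation bound
`ε_r/(1-γ) + 2 γ ε_P/(1-γ)^2` for the value of a fixed policy. -/
theorem stmt6 {S A : Type*} [Fintype S] [Fintype A]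
    (P P' : S → A → S → ℝ) (π : S → A → ℝ) (r r' : S → A → ℝ)
    (V V' : S → ℝ) (γ εr εP : ℝ) (hγ0 : 0 ≤ γ) (hγ1 : γ < 1)
    (hP0 : ∀ s a s', 0 ≤ P s a s') (hP1 : ∀ s a, ∑ s', P s a s' = 1)
    (hP'0 : ∀ s a s', 0 ≤ P' s a s') (hP'1 : ∀ s a, ∑ s', P' s a s' = 1)
    (hπ0 : ∀ s a, 0 ≤ π s a) (hπ1 : ∀ s, ∑ a, π s a = 1)
    (hrb : ∀ s a, |r s a| ≤ 1)
    (hr : ∀ s a, |r s a - r' s a| ≤ εr)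
    (hTV : ∀ s a, (1 / 2) * ∑ s', |P s a s' - P' s a s'| ≤ εP)
    (hV : ∀ s, V s = ∑ a, π s a * (r s a + γ * ∑ s', P s a s' * V s'))
    (hV' : ∀ s, V' s = ∑ a, π s a * (r' s a + γ * ∑ s', P' s a s' * V' s')) :
    ∀ s, |V s - V' s| ≤ εr / (1 - γ) + 2 * γ * εP / (1 - γ) ^ 2 := by
  intro s0
  have hS : Nonempty S := ⟨s0⟩
  have hA : Nonempty A := by
    by_contra h
    rw [not_nonempty_iff] at h
    have := hπ1 s0
    simp [Finset.univ_eq_empty] at this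
  have h1γ : 0 < 1 - γ := by linarith
  have hεP : 0 ≤ εP :=
    le_trans (by positivity) (hTV s0 (Classical.arbitrary A))
  -- bound ‖V‖∞ ≤ 1/(1-γ)
  obtain ⟨sm, _, hsm⟩ := Finset.exists_max_image Finset.univ (fun s => |V s|)
    ⟨s0, Finset.mem_univ s0⟩
  set K := |V sm| with hK
  have hKle : ∀ s, |V s| ≤ K := fun s => hsm s (Finset.mem_univ s)
  have hK0 : 0 ≤ K := abs_nonneg _
  have hKbound : K ≤ 1 / (1 - γ) := by
    have hb : |V sm| ≤ 1 + γ * K := by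
      rw [hV sm]
      refine wsum_abs_le _ _ (hπ0 sm) (hπ1 sm) _ fun a => ?_
      have hinner : |∑ s', P sm a s' * V s'| ≤ K :=
        wsum_abs_le _ _ (hP0 sm a) (hP1 sm a) K hKle
      calc |r sm a + γ * ∑ s', P sm a s' * V s'|
          ≤ |r sm a| + |γ * ∑ s', P sm a s' * V s'| := abs_add_le _ _
        _ ≤ 1 + γ * K := by
            rw [abs_mul, abs_of_nonneg hγ0]
            exact add_le_add (hrb sm a) (mul_le_mul_of_nonneg_left hinner hγ0)
    rw [le_div_iff₀ h1γ]
    rw [← hK] at hb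
    nlinarith
  -- bound on the max of |V - V'|
  obtain ⟨sx, _, hsx⟩ := Finset.exists_max_image Finset.univ (fun s => |V s - V' s|)
    ⟨s0, Finset.mem_univ s0⟩
  have hMle : ∀ s, |V s - V' s| ≤ |V sx - V' sx| := fun s => hsx s (Finset.mem_univ s)
  have hMrec : |V sx - V' sx| ≤ εr + γ * (2 * εP * K + |V sx - V' sx|) := by
    have hdiff : V sx - V' sx = ∑ a, π sx a *
        ((r sx a - r' sx a) + γ * ((∑ s', (P sx a s' - P' sx a s') * V s')
          + ∑ s', P' sx a s' * (V s' - V' s'))) := by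
      rw [hV sx, hV' sx, ← Finset.sum_sub_distrib]
      refine Finset.sum_congr rfl fun a _ => ?_
      have hin : (∑ s', (P sx a s' - P' sx a s') * V s')
          + ∑ s', P' sx a s' * (V s' - V' s')
          = (∑ s', P sx a s' * V s') - ∑ s', P' sx a s' * V' s' := by
        rw [← Finset.sum_add_distrib, ← Finset.sum_sub_distrib]
        exact Finset.sum_congr rfl fun s' _ => by ring
      rw [hin]; ring
    conv_lhs => rw [hdiff]
    refine wsum_abs_le _ _ (hπ0 sx) (hπ1 sx) _ fun a => ?_
    have h2 : |∑ s', (P sx a s' - P' sx a s') * V s'| ≤ 2 * εP * K := by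
      calc |∑ s', (P sx a s' - P' sx a s') * V s'|
          ≤ ∑ s', |(P sx a s' - P' sx a s') * V s'| := Finset.abs_sum_le_sum_abs _ _
        _ ≤ ∑ s', |P sx a s' - P' sx a s'| * K := by
            refine Finset.sum_le_sum fun s' _ => ?_
            rw [abs_mul]
            exact mul_le_mul_of_nonneg_left (hKle s') (abs_nonneg _)
        _ = (∑ s', |P sx a s' - P' sx a s'|) * K := (Finset.sum_mul _ _ _).symm
        _ ≤ (2 * εP) * K := by
            refine mul_le_mul_of_nonneg_right ?_ hK0
            have := hTV sx a
            linarith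
    have h3 : |∑ s', P' sx a s' * (V s' - V' s')| ≤ |V sx - V' sx| :=
      wsum_abs_le _ _ (hP'0 sx a) (hP'1 sx a) _ hMle
    calc |(r sx a - r' sx a) + γ * ((∑ s', (P sx a s' - P' sx a s') * V s')
          + ∑ s', P' sx a s' * (V s' - V' s'))|
        ≤ |r sx a - r' sx a| + |γ * ((∑ s', (P sx a s' - P' sx a s') * V s')
          + ∑ s', P' sx a s' * (V s' - V' s'))| := abs_add_le _ _
      _ ≤ εr + γ * (2 * εP * K + |V sx - V' sx|) := by
          rw [abs_mul, abs_of_nonneg hγ0]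
          refine add_le_add (hr sx a) (mul_le_mul_of_nonneg_left ?_ hγ0)
          calc |(∑ s', (P sx a s' - P' sx a s') * V s')
                + ∑ s', P' sx a s' * (V s' - V' s')|
              ≤ |∑ s', (P sx a s' - P' sx a s') * V s'|
                + |∑ s', P' sx a s' * (V s' - V' s')| := abs_add_le _ _
            _ ≤ 2 * εP * K + |V sx - V' sx| := add_le_add h2 h3
  have hMbound : |V sx - V' sx| ≤ εr / (1 - γ) + 2 * γ * εP / (1 - γ) ^ 2 := by
    set M := |V sx - V' sx| with hM
    have hKγ : γ * (2 * εP * K) ≤ 2 * γ * εP / (1 - γ) := by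
      have h1 : γ * (2 * εP * K) ≤ γ * (2 * εP * (1 / (1 - γ))) := by
        refine mul_le_mul_of_nonneg_left ?_ hγ0
        exact mul_le_mul_of_nonneg_left hKbound (by positivity)
      calc γ * (2 * εP * K) ≤ γ * (2 * εP * (1 / (1 - γ))) := h1
        _ = 2 * γ * εP / (1 - γ) := by ring
    have hM1γ : M * (1 - γ) ≤ εr + 2 * γ * εP / (1 - γ) := by nlinarith
    rw [div_add_div _ _ (ne_of_gt h1γ) (by positivity : (1 - γ) ^ 2 ≠ 0)]
    rw [le_div_iff₀ (by positivity : (0:ℝ) < (1 - γ) * (1 - γ) ^ 2)]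
    have := mul_le_mul_of_nonneg_right hM1γ (le_of_lt h1γ)
    have hexp : (εr + 2 * γ * εP / (1 - γ)) * (1 - γ)
        = εr * (1 - γ) + 2 * γ * εP := by
      field_simp
    nlinarith [sq_nonneg (1 - γ)]
  exact le_trans (hMle s0) hMbound
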